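/- Let f be a slice function of class C¹ on an axially symmetric open subset Ω of a hypercomplex subspace M of dimension m+1 > 2 (in the associative case). Then on Ω minus the reals, the spherical Dirac operator satisfies Γ_B f = (m-1)·Im(x)·f'_s(x), where f'_s is the spherical derivative of f. -/

import Mathlib

noncomputable section
namespace PaperStmt

variable {A : Type*} [NormedRing A] [NormedAlgebra ℝ A] {m : ℕ}

/-- Partial derivative in the `i`-th coordinate direction. -/
def pd (i : Fin (m + 1)) (f : (Fin (m + 1) → ℝ) → A) : (Fin (m + 1) → ℝ) → A :=
  fun x => fderiv ℝ f x (Pi.single i 1)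

/-- The Cauchy–Riemann operator `∂̄_B = (1/2)(∂₀ + ∑ᵢ vᵢ ∂ᵢ)` induced by the
basis `B = (1, v₁, …, v_m)` (so `v 0 = 1`). -/
def dbar (v : Fin (m + 1) → A) (f : (Fin (m + 1) → ℝ) → A) : (Fin (m + 1) → ℝ) → A :=
  fun x => (2 : ℝ)⁻¹ •
    (pd 0 f x + ∑ i ∈ Finset.univ.erase (0 : Fin (m + 1)), v i * pd i f x)

/-- The conjugated Cauchy–Riemann operator `∂_B = (1/2)(∂₀ - ∑ᵢ vᵢ ∂ᵢ)`. -/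
def dconj (v : Fin (m + 1) → A) (f : (Fin (m + 1) → ℝ) → A) : (Fin (m + 1) → ℝ) → A :=
  fun x => (2 : ℝ)⁻¹ •
    (pd 0 f x - ∑ i ∈ Finset.univ.erase (0 : Fin (m + 1)), v i * pd i f x)

/-- The Laplacian `Δ_B = ∑ᵢ ∂ᵢ²` of `M ≅ ℝ^{m+1}`. -/
def lap (f : (Fin (m + 1) → ℝ) → A) : (Fin (m + 1) → ℝ) → A :=
  fun x => ∑ i : Fin (m + 1), pd i (pd i f) x

/-- The norm `β = ‖Im x‖` of the imaginary part of the point with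
coordinates `x`. -/
def nIm (x : Fin (m + 1) → ℝ) : ℝ :=
  Real.sqrt (∑ i ∈ Finset.univ.erase (0 : Fin (m + 1)), (x i) ^ 2)

/-- The point `α + iβ` of the complex half-plane corresponding to `x`. -/
def zeta (x : Fin (m + 1) → ℝ) : ℂ := ⟨x 0, nIm x⟩

/-- The imaginary part `Im(x) = ∑_{i=1}^m xᵢ vᵢ` of the point of `M` with
coordinates `x`. -/
def imv (v : Fin (m + 1) → A) (x : Fin (m + 1) → ℝ) : A :=
  ∑ i ∈ Finset.univ.erase (0 : Fin (m + 1)), x i • v i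

/-- The point of `M` with coordinates `x` w.r.t. the basis `(1, v₁, …, v_m)`. -/
def iot (v : Fin (m + 1) → A) (x : Fin (m + 1) → ℝ) : A :=
  ∑ i : Fin (m + 1), x i • v i

/-- The slice function `I(F₁ + √-1 F₂)` induced on (the coordinates of) `M` by
the stem function with components `F₁, F₂`:
`f(α + Jβ) = F₁(α+iβ) + J F₂(α+iβ)` with `β = ‖Im x‖ ≥ 0`, `J = Im(x)/β`. -/
def sfun (v : Fin (m + 1) → A) (F₁ F₂ : ℂ → A) : (Fin (m + 1) → ℝ) → A :=
  fun x => F₁ (zeta x) + imv v x * ((nIm x)⁻¹ • F₂ (zeta x))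

/-- The spherical derivative `f'ₛ(x) = β⁻¹ F₂(α+iβ)` of the slice function
induced by the stem components `(F₁, F₂)`. -/
def sder (F₂ : ℂ → A) : (Fin (m + 1) → ℝ) → A :=
  fun x => (nIm x)⁻¹ • F₂ (zeta x)

/-- Real partial derivative of a stem component along `1 ∈ ℂ`. -/
def d1 (F : ℂ → A) (z : ℂ) : A := fderiv ℝ F z 1

/-- Real partial derivative of a stem component along `i ∈ ℂ`. -/
def dI (F : ℂ → A) (z : ℂ) : A := fderiv ℝ F z Complex.I

/-- The tangential operator `L_{ij} = xᵢ ∂ⱼ - xⱼ ∂ᵢ`. -/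
def Lop (i j : Fin (m + 1)) (f : (Fin (m + 1) → ℝ) → A) : (Fin (m + 1) → ℝ) → A :=
  fun x => x i • pd j f x - x j • pd i f x

/-- The spherical Dirac operator `Γ_B = -(1/2) ∑_{i,j=1}^m vᵢ (vⱼ L_{ij})`. -/
def Gam (v : Fin (m + 1) → A) (f : (Fin (m + 1) → ℝ) → A) : (Fin (m + 1) → ℝ) → A :=
  fun x => -((2 : ℝ)⁻¹ •
    ∑ i ∈ Finset.univ.erase (0 : Fin (m + 1)),
      ∑ j ∈ Finset.univ.erase (0 : Fin (m + 1)), v i * (v j * Lop i j f x))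

/-- **Spherical Dirac operator on slice functions.**
Let `f` be a `C¹` slice function, induced by the stem components `(F₁, F₂)`
(with the symmetry `F₁(z̄) = F₁(z)`, `F₂(z̄) = -F₂(z)`), on the axially
symmetric open subset `Ω = {x : ζ(x) ∈ D}` of a hypercomplex subspace `M` of
dimension `m+1 > 2` of an associative real *-algebra.  Then on `Ω \ ℝ` one has
`Γ_B f = (m-1) · Im(x) · f'ₛ(x)`. -/
theorem gamma_of_slice_function
    (hm : 2 ≤ m)
    (v : Fin (m + 1) → A) (hv0 : v 0 = 1)
    (hsq : ∀ i : Fin (m + 1), i ≠ 0 → v i * v i = -1)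
    (hanti : ∀ i j : Fin (m + 1), i ≠ 0 → j ≠ 0 → i ≠ j → v i * v j = -(v j * v i))
    (D : Set ℂ) (hD : IsOpen D) (hDsym : ∀ z ∈ D, (starRingEnd ℂ) z ∈ D)
    (F₁ F₂ : ℂ → A)
    (hs1 : ∀ z ∈ D, F₁ ((starRingEnd ℂ) z) = F₁ z)
    (hs2 : ∀ z ∈ D, F₂ ((starRingEnd ℂ) z) = -F₂ z)
    (hF1 : ContDiffOn ℝ 1 F₁ D) (hF2 : ContDiffOn ℝ 1 F₂ D) :
    ∀ x : Fin (m + 1) → ℝ, zeta x ∈ D → nIm x ≠ 0 →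
      Gam v (sfun v F₁ F₂) x = ((m : ℝ) - 1) • (imv v x * sder F₂ x) := by
  intro x hz hβ
  classical
  set E : Finset (Fin (m+1)) := Finset.univ.erase 0 with hE
  set pr : Fin (m + 1) → ((Fin (m + 1) → ℝ) →L[ℝ] ℝ) :=
    fun i => ContinuousLinearMap.proj i with hpr
  have hprapp : ∀ (i : Fin (m+1)) (y : Fin (m+1) → ℝ), pr i y = y i := by
    intro i y; rw [hpr]; rfl
  have hsum_ne : (∑ i ∈ E, (x i)^2) ≠ 0 := by
    intro h
    apply hβ
    show Real.sqrt _ = 0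
    rw [hE] at h
    rw [h, Real.sqrt_zero]
  set Ds : (Fin (m + 1) → ℝ) →L[ℝ] ℝ := ∑ i ∈ E, ((x i) • pr i + (x i) • pr i) with hDs
  have hDsapp : ∀ y : Fin (m+1) → ℝ, Ds y = ∑ i ∈ E, (x i * y i + x i * y i) := by
    intro y
    rw [hDs, ContinuousLinearMap.sum_apply]
    refine Finset.sum_congr rfl fun i _ => ?_
    rw [ContinuousLinearMap.add_apply, ContinuousLinearMap.smul_apply, hprapp, smul_eq_mul]
  have hs : HasFDerivAt (fun y : Fin (m+1) → ℝ => ∑ i ∈ E, y i ^ 2) Ds x := by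
    rw [hDs]
    apply HasFDerivAt.fun_sum
    intro i _
    have h1 : HasFDerivAt (fun y : Fin (m+1) → ℝ => y i) (pr i) x := by
      rw [hpr]
      exact ContinuousLinearMap.hasFDerivAt
        (ContinuousLinearMap.proj (R := ℝ) (φ := fun _ : Fin (m+1) => ℝ) i)
    simpa [pow_two] using h1.fun_mul h1
  set Dβ : (Fin (m + 1) → ℝ) →L[ℝ] ℝ := (1 / (2 * nIm x)) • Ds with hDβ
  have hβd : HasFDerivAt nIm Dβ x := hs.sqrt hsum_ne
  set Z : (Fin (m + 1) → ℝ) →L[ℝ] ℂ :=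
    Complex.ofRealCLM.comp (pr 0) + Dβ.smulRight Complex.I with hZdef
  have hzfun : (zeta : (Fin (m+1) → ℝ) → ℂ) = fun y => (↑(y 0) + nIm y • Complex.I) := by
    funext y
    rw [zeta, Complex.mk_eq_add_mul_I, Complex.real_smul]
  have hzeta : HasFDerivAt zeta Z x := by
    rw [hzfun, hZdef, hpr]
    exact ((Complex.ofRealCLM.comp
      (ContinuousLinearMap.proj (R := ℝ) (φ := fun _ : Fin (m+1) => ℝ) 0)).hasFDerivAt).add
      (hβd.smul_const _)
  have hF1d : HasFDerivAt F₁ (fderiv ℝ F₁ (zeta x)) (zeta x) :=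
    (((hF1.contDiffAt (hD.mem_nhds hz)).differentiableAt one_ne_zero)).hasFDerivAt
  have hF2d : HasFDerivAt F₂ (fderiv ℝ F₂ (zeta x)) (zeta x) :=
    (((hF2.contDiffAt (hD.mem_nhds hz)).differentiableAt one_ne_zero)).hasFDerivAt
  set D1 : ℂ →L[ℝ] A := fderiv ℝ F₁ (zeta x) with hD1
  set D2 : ℂ →L[ℝ] A := fderiv ℝ F₂ (zeta x) with hD2
  have hinv : HasFDerivAt (fun y => (nIm y)⁻¹) ((-((nIm x)^2)⁻¹) • Dβ) x :=
    (hasDerivAt_inv hβ).comp_hasFDerivAt x hβd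
  have hF2z : HasFDerivAt (fun y => F₂ (zeta y)) (D2.comp Z) x := hF2d.comp x hzeta
  set Dg : (Fin (m + 1) → ℝ) →L[ℝ] A :=
    (nIm x)⁻¹ • (D2.comp Z) + ((-((nIm x)^2)⁻¹) • Dβ).smulRight (F₂ (zeta x)) with hDg
  have hg : HasFDerivAt (fun y => (nIm y)⁻¹ • F₂ (zeta y)) Dg x := hinv.smul hF2z
  set Limv : (Fin (m + 1) → ℝ) →L[ℝ] A := ∑ i ∈ E, (pr i).smulRight (v i) with hLimv
  have hLapp : ∀ y : Fin (m+1) → ℝ, Limv y = ∑ i ∈ E, y i • v i := by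
    intro y
    rw [hLimv, ContinuousLinearMap.sum_apply]
    refine Finset.sum_congr rfl fun i _ => ?_
    rw [ContinuousLinearMap.smulRight_apply, hprapp]
  have himv : HasFDerivAt (imv v) Limv x := by
    have h1 : (imv v : (Fin (m+1) → ℝ) → A) = ⇑Limv := by
      funext y
      rw [hLapp y, imv, hE]
    rw [h1]
    exact Limv.hasFDerivAt
  have hmul : HasFDerivAt (fun y => imv v y * ((nIm y)⁻¹ • F₂ (zeta y)))
      (imv v x • Dg + Limv.smulRight ((nIm x)⁻¹ • F₂ (zeta x))) x := himv.mul' hg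
  have hF1z : HasFDerivAt (fun y => F₁ (zeta y)) (D1.comp Z) x := hF1d.comp x hzeta
  set Df : (Fin (m + 1) → ℝ) →L[ℝ] A :=
    D1.comp Z + (imv v x • Dg + Limv.smulRight ((nIm x)⁻¹ • F₂ (zeta x))) with hDf
  have hf : HasFDerivAt (sfun v F₁ F₂) Df x := by
    rw [hDf]
    exact hF1z.add hmul
  have hmemE : ∀ i : Fin (m+1), i ∈ E → i ≠ 0 := by
    intro i hi
    rw [hE] at hi
    exact Finset.ne_of_mem_erase hi
  have key : ∀ i ∈ E, ∀ j ∈ E,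
      Lop i j (sfun v F₁ F₂) x = (x i • v j - x j • v i) * sder F₂ x := by
    intro i hi j hj
    have hi0 : i ≠ 0 := hmemE i hi
    have hj0 : j ≠ 0 := hmemE j hj
    set w : Fin (m+1) → ℝ :=
      x i • (Pi.single j 1 : Fin (m+1) → ℝ) - x j • (Pi.single i 1 : Fin (m+1) → ℝ) with hw
    have hwapp : ∀ k, w k = x i * (Pi.single j 1 : Fin (m+1) → ℝ) k - x j * (Pi.single i 1 : Fin (m+1) → ℝ) k := by
      intro k
      rw [hw]
      simp
    have hsumw : ∑ k ∈ E, x k * w k = 0 := by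
      have hsingle : ∀ (l : Fin (m+1)), l ∈ E → ∀ (cc : ℝ),
          ∑ k ∈ E, cc * (x k * (Pi.single l 1 : Fin (m+1) → ℝ) k) = cc * x l := by
        intro l hl cc
        rw [Finset.sum_eq_single_of_mem l hl]
        · simp
        · intro k _ hk
          rw [Pi.single_eq_of_ne hk]
          ring
      have e1 : ∀ k, x k * w k =
          x i * (x k * (Pi.single j 1 : Fin (m+1) → ℝ) k) - x j * (x k * (Pi.single i 1 : Fin (m+1) → ℝ) k) := by
        intro k
        rw [hwapp k]
        ring
      rw [Finset.sum_congr rfl fun k _ => e1 k, Finset.sum_sub_distrib,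
        hsingle j hj (x i), hsingle i hi (x j)]
      ring
    have hDsw : Ds w = 0 := by
      rw [hDsapp, Finset.sum_add_distrib, hsumw]
      simp
    have hDβw : Dβ w = 0 := by
      rw [hDβ, ContinuousLinearMap.smul_apply, hDsw, smul_zero]
    have hpr0w : pr 0 w = 0 := by
      rw [hprapp, hwapp]
      rw [Pi.single_eq_of_ne (Ne.symm hj0), Pi.single_eq_of_ne (Ne.symm hi0)]
      ring
    have hZw : Z w = 0 := by
      rw [hZdef, ContinuousLinearMap.add_apply, ContinuousLinearMap.comp_apply,
        ContinuousLinearMap.smulRight_apply, hpr0w, hDβw]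
      simp
    have hDgw : Dg w = 0 := by
      rw [hDg, ContinuousLinearMap.add_apply, ContinuousLinearMap.smul_apply,
        ContinuousLinearMap.comp_apply, ContinuousLinearMap.smulRight_apply,
        ContinuousLinearMap.smul_apply, hZw, hDβw]
      simp
    have hLw : Limv w = x i • v j - x j • v i := by
      have hsm : ∀ (l : Fin (m+1)), l ∈ E → ∀ (cc : ℝ),
          ∑ k ∈ E, (cc * (Pi.single l 1 : Fin (m+1) → ℝ) k) • v k = cc • v l := by
        intro l hl cc
        rw [Finset.sum_eq_single_of_mem l hl]
        · simp
        · intro k _ hk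
          rw [Pi.single_eq_of_ne hk]
          simp
      have e1 : ∀ k, w k • v k =
          (x i * (Pi.single j 1 : Fin (m+1) → ℝ) k) • v k - (x j * (Pi.single i 1 : Fin (m+1) → ℝ) k) • v k := by
        intro k
        rw [hwapp k, sub_smul]
      rw [hLapp, Finset.sum_congr rfl fun k _ => e1 k, Finset.sum_sub_distrib,
        hsm j hj (x i), hsm i hi (x j)]
    have hDfw : Df w = (x i • v j - x j • v i) * ((nIm x)⁻¹ • F₂ (zeta x)) := by
      rw [hDf, ContinuousLinearMap.add_apply, ContinuousLinearMap.add_apply,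
        ContinuousLinearMap.comp_apply, ContinuousLinearMap.smul_apply,
        ContinuousLinearMap.smulRight_apply, hZw, hDgw, hLw]
      rw [map_zero, smul_zero, zero_add, zero_add, smul_eq_mul]
    have hpd : ∀ k : Fin (m+1), pd k (sfun v F₁ F₂) x = Df (Pi.single k 1) := by
      intro k
      rw [pd, hf.fderiv]
    rw [Lop, hpd, hpd, ← map_smul, ← map_smul, ← map_sub, ← hw, hDfw]
    rfl
  -- final algebraic computation
  set c : A := sder F₂ x with hc
  set a : Fin (m+1) → A := fun k => x k • (v k * c) with ha
  have hP : imv v x * c = ∑ k ∈ E, a k := by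
    rw [imv, hE, Finset.sum_mul]
    refine Finset.sum_congr rfl fun k _ => ?_
    rw [ha, smul_mul_assoc]
  set P : A := ∑ k ∈ E, a k with hPdef
  have hterm : ∀ i ∈ E, ∀ j ∈ E,
      v i * (v j * ((x i • v j - x j • v i) * c)) =
        if j = i then 0 else (-(a i) - a j) := by
    intro i hi j hj
    have hi0 : i ≠ 0 := hmemE i hi
    have hj0 : j ≠ 0 := hmemE j hj
    by_cases hij : j = i
    · subst hij
      rw [if_pos rfl, sub_self, zero_mul, mul_zero, mul_zero]
    · rw [if_neg hij]
      have hsub : (x i • v j - x j • v i) * c = x i • (v j * c) - x j • (v i * c) := by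
        rw [sub_mul, smul_mul_assoc, smul_mul_assoc]
      have hjj : v j * (v j * c) = -c := by
        rw [← mul_assoc, hsq j hj0, neg_one_mul]
      have htrip : v i * ((v j * v i) * c) = v j * c := by
        rw [← mul_assoc, ← mul_assoc, hanti i j hi0 hj0 (Ne.symm hij), neg_mul,
          mul_assoc (v j) (v i) (v i), hsq i hi0, mul_neg_one, neg_neg]
      have e1 : v j * ((x i • v j - x j • v i) * c) =
          x i • (-c) - x j • ((v j * v i) * c) := by
        rw [hsub, mul_sub, mul_smul_comm, mul_smul_comm, hjj, ← mul_assoc]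
      rw [e1, mul_sub, mul_smul_comm, mul_smul_comm, htrip]
      simp only [ha, mul_neg, smul_neg]
  have hcardE : E.card = m := by
    rw [hE, Finset.card_erase_of_mem (Finset.mem_univ 0), Finset.card_univ,
      Fintype.card_fin]
    omega
  have hrow : ∀ i ∈ E,
      (∑ j ∈ E, (if j = i then (0:A) else -(a i) - a j)) =
        ((m:ℝ) - 1) • (-(a i)) - (P - a i) := by
    intro i hi
    rw [← Finset.add_sum_erase E _ hi, if_pos rfl, zero_add]
    rw [Finset.sum_congr rfl (fun j hj => if_neg (Finset.ne_of_mem_erase hj))]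
    rw [Finset.sum_sub_distrib, Finset.sum_const, Finset.sum_erase_eq_sub hi,
      Finset.card_erase_of_mem hi, hcardE, ← hPdef]
    rw [← Nat.cast_smul_eq_nsmul ℝ, Nat.cast_sub (le_trans one_le_two hm), Nat.cast_one]
  have htot : (∑ i ∈ E, ∑ j ∈ E, v i * (v j * Lop i j (sfun v F₁ F₂) x)) =
      ((m:ℝ) - 1) • (-P) - ((m:ℝ) • P - P) := by
    have h1 : ∀ i ∈ E, (∑ j ∈ E, v i * (v j * Lop i j (sfun v F₁ F₂) x))
        = ((m:ℝ) - 1) • (-(a i)) - (P - a i) := by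
      intro i hi
      rw [Finset.sum_congr rfl (fun j hj => by rw [key i hi j hj, hterm i hi j hj])]
      exact hrow i hi
    rw [Finset.sum_congr rfl h1, Finset.sum_sub_distrib, ← Finset.smul_sum,
      Finset.sum_neg_distrib, ← hPdef, Finset.sum_sub_distrib, Finset.sum_const,
      hcardE, ← hPdef, ← Nat.cast_smul_eq_nsmul ℝ]
  simp only [Gam]
  rw [← hE, htot, hP]
  module


end PaperStmt
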